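/- Let n ≥ 2, let H_1, ..., H_k be finite simple graphs with H_1 a single edge, and let β = (β_1, ..., β_k) ∈ ℝ^k with β_2, ..., β_k ≥ 0 (β_1 arbitrary). Then the exponential random graph measure μ_{n;β} satisfies the FKG lattice condition: for all configurations x, y ∈ A_n, μ_{n;β}(x ∨ y) · μ_{n;β}(x ∧ y) ≥ μ_{n;β}(x) · μ_{n;β}(y), where x ∨ y and x ∧ y are the componentwise maximum and minimum configurations (corresponding to the graphs with union and intersection edge sets). -/

import Mathlib

open Finset

/-- Edges of the complete graph on `n` labeled vertices. -/
def Edge (n : ℕ) : Type := {e : Sym2 (Fin n) // ¬ e.IsDiag}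

instance (n : ℕ) : Fintype (Edge n) := by unfold Edge; infer_instance
instance (n : ℕ) : DecidableEq (Edge n) := by unfold Edge; infer_instance

/-- The simple graph on `Fin n` associated with a configuration `x ∈ {0,1}^{E_n}`. -/
def graphOf {n : ℕ} (x : Edge n → Fin 2) : SimpleGraph (Fin n) where
  Adj a b := ∃ hab : a ≠ b, x ⟨s(a, b), fun hd => hab (Sym2.mk_isDiag_iff.mp hd)⟩ = 1
  symm := by
    constructor
    rintro a b ⟨hab, hx⟩
    refine ⟨hab.symm, ?_⟩
    have he : (⟨s(b, a), fun hd => hab.symm (Sym2.mk_isDiag_iff.mp hd)⟩ : Edge n)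
        = ⟨s(a, b), fun hd => hab (Sym2.mk_isDiag_iff.mp hd)⟩ :=
      Subtype.ext Sym2.eq_swap
    rw [he]; exact hx
  loopless := by constructor; rintro a ⟨hab, _⟩; exact hab rfl

/-- The number `hom(H, G)` of edge-preserving vertex maps from `H` to `G`. -/
noncomputable def homCount {V W : Type*} (H : SimpleGraph W) (G : SimpleGraph V) : ℕ :=
  Nat.card {f : W → V // ∀ a b, H.Adj a b → G.Adj (f a) (f b)}

/-- The homomorphism density `t(H, G) = hom(H, G) / n^{|V(H)|}` for a graph `G`
on `n` vertices and `H` on `m` vertices. -/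
noncomputable def homDensity {m n : ℕ} (H : SimpleGraph (Fin m)) (G : SimpleGraph (Fin n)) : ℝ :=
  (homCount H G : ℝ) / (n : ℝ) ^ m

/-- The Hamiltonian of a general exponential random graph:
`H_{n;β}(G) = n² Σ_j β_j t(H_j, G)`. -/
noncomputable def HamERG (n k : ℕ) (m : Fin k → ℕ)
    (Hs : (j : Fin k) → SimpleGraph (Fin (m j))) (β : Fin k → ℝ)
    (x : Edge n → Fin 2) : ℝ :=
  (n : ℝ) ^ 2 * ∑ j : Fin k, β j * homDensity (Hs j) (graphOf x)

/-- Partition function of the exponential random graph. -/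
noncomputable def ZERG (n k : ℕ) (m : Fin k → ℕ)
    (Hs : (j : Fin k) → SimpleGraph (Fin (m j))) (β : Fin k → ℝ) : ℝ :=
  ∑ x : Edge n → Fin 2, Real.exp (HamERG n k m Hs β x)

/-- Gibbs measure of the exponential random graph. -/
noncomputable def gibbsERG (n k : ℕ) (m : Fin k → ℕ)
    (Hs : (j : Fin k) → SimpleGraph (Fin (m j))) (β : Fin k → ℝ)
    (x : Edge n → Fin 2) : ℝ :=
  Real.exp (HamERG n k m Hs β x) / ZERG n k m Hs β

/-- Expectation under the exponential random graph measure. -/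
noncomputable def expectERG (n k : ℕ) (m : Fin k → ℕ)
    (Hs : (j : Fin k) → SimpleGraph (Fin (m j))) (β : Fin k → ℝ)
    (f : (Edge n → Fin 2) → ℝ) : ℝ :=
  ∑ x : Edge n → Fin 2, f x * gibbsERG n k m Hs β x

lemma fin2_min_eq_one (a b : Fin 2) : min a b = 1 ↔ a = 1 ∧ b = 1 := by revert a b; decide

lemma fin2_max_eq_one (a b : Fin 2) : max a b = 1 ↔ a = 1 ∨ b = 1 := by revert a b; decide

open Classical in
lemma homCount_eq_card {V W : Type*} [Fintype V] [Fintype W] (H : SimpleGraph W)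
    (G : SimpleGraph V) :
    homCount H G =
      (Finset.univ.filter (fun f : W → V => ∀ a b, H.Adj a b → G.Adj (f a) (f b))).card := by
  rw [homCount, Nat.card_eq_fintype_card, Fintype.card_subtype]

lemma Q_min {n mm : ℕ} (H : SimpleGraph (Fin mm)) (x y : Edge n → Fin 2) (f : Fin mm → Fin n) :
    (∀ a b, H.Adj a b → (graphOf (fun i => min (x i) (y i))).Adj (f a) (f b)) ↔
      (∀ a b, H.Adj a b → (graphOf x).Adj (f a) (f b)) ∧
        (∀ a b, H.Adj a b → (graphOf y).Adj (f a) (f b)) := by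
  constructor
  · intro h
    constructor <;> intro a b hab <;> obtain ⟨hne, hm⟩ := h a b hab <;>
      rw [fin2_min_eq_one] at hm
    · exact ⟨hne, hm.1⟩
    · exact ⟨hne, hm.2⟩
  · rintro ⟨h1, h2⟩ a b hab
    obtain ⟨hne, hx⟩ := h1 a b hab
    obtain ⟨hne', hy⟩ := h2 a b hab
    exact ⟨hne, (fin2_min_eq_one _ _).mpr ⟨hx, hy⟩⟩

lemma Q_max_left {n mm : ℕ} (H : SimpleGraph (Fin mm)) (x y : Edge n → Fin 2)
    (f : Fin mm → Fin n) (h : ∀ a b, H.Adj a b → (graphOf x).Adj (f a) (f b)) :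
    ∀ a b, H.Adj a b → (graphOf (fun i => max (x i) (y i))).Adj (f a) (f b) := by
  intro a b hab
  obtain ⟨hne, hx⟩ := h a b hab
  exact ⟨hne, (fin2_max_eq_one _ _).mpr (Or.inl hx)⟩

lemma Q_max_right {n mm : ℕ} (H : SimpleGraph (Fin mm)) (x y : Edge n → Fin 2)
    (f : Fin mm → Fin n) (h : ∀ a b, H.Adj a b → (graphOf y).Adj (f a) (f b)) :
    ∀ a b, H.Adj a b → (graphOf (fun i => max (x i) (y i))).Adj (f a) (f b) := by
  intro a b hab
  obtain ⟨hne, hy⟩ := h a b hab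
  exact ⟨hne, (fin2_max_eq_one _ _).mpr (Or.inr hy)⟩


lemma homCount_eq_ncard {n mm : ℕ} (H : SimpleGraph (Fin mm)) (G : SimpleGraph (Fin n)) :
    homCount H G = Set.ncard {f : Fin mm → Fin n | ∀ a b, H.Adj a b → G.Adj (f a) (f b)} :=
  Nat.card_coe_set_eq _

lemma homCount_super {n mm : ℕ} (H : SimpleGraph (Fin mm)) (x y : Edge n → Fin 2) :
    homCount H (graphOf x) + homCount H (graphOf y) ≤
      homCount H (graphOf (fun i => max (x i) (y i)))
        + homCount H (graphOf (fun i => min (x i) (y i))) := by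
  rw [homCount_eq_ncard, homCount_eq_ncard, homCount_eq_ncard, homCount_eq_ncard]
  set s := {f : Fin mm → Fin n | ∀ a b, H.Adj a b → (graphOf x).Adj (f a) (f b)} with hs
  set t := {f : Fin mm → Fin n | ∀ a b, H.Adj a b → (graphOf y).Adj (f a) (f b)} with ht
  have hinter : {f : Fin mm → Fin n |
      ∀ a b, H.Adj a b → (graphOf (fun i => min (x i) (y i))).Adj (f a) (f b)} = s ∩ t := by
    ext f
    exact Q_min H x y f
  have hunion : s ∪ t ⊆ {f : Fin mm → Fin n |
      ∀ a b, H.Adj a b → (graphOf (fun i => max (x i) (y i))).Adj (f a) (f b)} := by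
    rintro f (hf | hf)
    · exact Q_max_left H x y f hf
    · exact Q_max_right H x y f hf
  calc s.ncard + t.ncard = (s ∪ t).ncard + (s ∩ t).ncard :=
        (Set.ncard_union_add_ncard_inter s t (Set.toFinite s) (Set.toFinite t)).symm
    _ ≤ _ := by
        rw [hinter]
        exact Nat.add_le_add_right (Set.ncard_le_ncard hunion (Set.toFinite _)) _

lemma homCount_edge_modular {n mm : ℕ} (hmm : mm = 2) (H : SimpleGraph (Fin mm))
    (hH : ∀ a b, H.Adj a b ↔ a ≠ b) (x y : Edge n → Fin 2) :
    homCount H (graphOf (fun i => max (x i) (y i)))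
        + homCount H (graphOf (fun i => min (x i) (y i)))
      = homCount H (graphOf x) + homCount H (graphOf y) := by
  rw [homCount_eq_ncard, homCount_eq_ncard, homCount_eq_ncard, homCount_eq_ncard]
  set s := {f : Fin mm → Fin n | ∀ a b, H.Adj a b → (graphOf x).Adj (f a) (f b)} with hs
  set t := {f : Fin mm → Fin n | ∀ a b, H.Adj a b → (graphOf y).Adj (f a) (f b)} with ht
  have hinter : {f : Fin mm → Fin n |
      ∀ a b, H.Adj a b → (graphOf (fun i => min (x i) (y i))).Adj (f a) (f b)} = s ∩ t := by
    ext f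
    exact Q_min H x y f
  have hunion : {f : Fin mm → Fin n |
      ∀ a b, H.Adj a b → (graphOf (fun i => max (x i) (y i))).Adj (f a) (f b)} = s ∪ t := by
    ext f
    constructor
    · intro hf
      set a₀ : Fin mm := ⟨0, by omega⟩ with ha₀
      set b₀ : Fin mm := ⟨1, by omega⟩ with hb₀
      have hne₀ : a₀ ≠ b₀ := by
        intro h
        exact absurd (congrArg Fin.val h) (by simp [ha₀, hb₀])
      have key : ∀ z : Edge n → Fin 2, (graphOf z).Adj (f a₀) (f b₀) →
          ∀ a b, H.Adj a b → (graphOf z).Adj (f a) (f b) := by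
        intro z hAdj a b hab
        have hab' : a ≠ b := (hH a b).mp hab
        have hval : a.val ≠ b.val := fun h => hab' (Fin.ext h)
        have ha := a.isLt
        have hb := b.isLt
        rcases (show (a.val = 0 ∧ b.val = 1) ∨ (a.val = 1 ∧ b.val = 0) by omega) with
          ⟨h1, h2⟩ | ⟨h1, h2⟩
        · have ea : a = a₀ := Fin.ext h1
          have eb : b = b₀ := Fin.ext h2
          rw [ea, eb]; exact hAdj
        · have ea : a = b₀ := Fin.ext h1
          have eb : b = a₀ := Fin.ext h2
          rw [ea, eb]; exact hAdj.symm
      obtain ⟨hne, hmax⟩ := hf a₀ b₀ ((hH _ _).mpr hne₀)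
      rcases (fin2_max_eq_one _ _).mp hmax with hx1 | hy1
      · exact Or.inl (key x ⟨hne, hx1⟩)
      · exact Or.inr (key y ⟨hne, hy1⟩)
    · rintro (hf | hf)
      · exact Q_max_left H x y f hf
      · exact Q_max_right H x y f hf
  rw [hinter, hunion]
  exact Set.ncard_union_add_ncard_inter s t (Set.toFinite s) (Set.toFinite t)

lemma ham_supermodular (n k : ℕ) (hn : 2 ≤ n) (hk : 0 < k) (m : Fin k → ℕ)
    (Hs : (j : Fin k) → SimpleGraph (Fin (m j))) (β : Fin k → ℝ)
    (hm₀ : m ⟨0, hk⟩ = 2)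
    (hH₁ : ∀ a b, (Hs ⟨0, hk⟩).Adj a b ↔ a ≠ b)
    (hβ : ∀ j : Fin k, j ≠ ⟨0, hk⟩ → 0 ≤ β j)
    (x y : Edge n → Fin 2) :
    HamERG n k m Hs β x + HamERG n k m Hs β y ≤
      HamERG n k m Hs β (fun i => max (x i) (y i))
        + HamERG n k m Hs β (fun i => min (x i) (y i)) := by
  have hnpos : (0:ℝ) < n := by positivity
  unfold HamERG
  rw [← mul_add, ← mul_add, ← Finset.sum_add_distrib, ← Finset.sum_add_distrib]
  apply mul_le_mul_of_nonneg_left _ (by positivity)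
  apply Finset.sum_le_sum
  intro j _
  by_cases hj : j = ⟨0, hk⟩
  · subst hj
    apply le_of_eq
    rw [← mul_add, ← mul_add]
    congr 1
    unfold homDensity
    rw [← add_div, ← add_div]
    congr 1
    exact_mod_cast (homCount_edge_modular hm₀ (Hs ⟨0, hk⟩) hH₁ x y).symm
  · have hb := hβ j hj
    have hcount := homCount_super (Hs j) x y
    rw [← mul_add, ← mul_add]
    apply mul_le_mul_of_nonneg_left _ hb
    unfold homDensity
    rw [← add_div, ← add_div]
    apply div_le_div_of_nonneg_right ?_ (by positivity)
    exact_mod_cast hcount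

lemma ZERG_pos (n k : ℕ) (m : Fin k → ℕ)
    (Hs : (j : Fin k) → SimpleGraph (Fin (m j))) (β : Fin k → ℝ) :
    0 < ZERG n k m Hs β :=
  Finset.sum_pos (fun _ _ => Real.exp_pos _) Finset.univ_nonempty

/-- Lemma 4.1: if `H₁` is a single edge, `β₁ ∈ ℝ` is arbitrary and
`β₂, …, β_k ≥ 0`, the exponential random graph measure satisfies the FKG lattice
condition. -/
theorem erg_fkg_lattice_condition (n k : ℕ) (hn : 2 ≤ n) (hk : 0 < k) (m : Fin k → ℕ)
    (Hs : (j : Fin k) → SimpleGraph (Fin (m j))) (β : Fin k → ℝ)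
    (hm₀ : m ⟨0, hk⟩ = 2)
    (hH₁ : ∀ a b, (Hs ⟨0, hk⟩).Adj a b ↔ a ≠ b)
    (hβ : ∀ j : Fin k, j ≠ ⟨0, hk⟩ → 0 ≤ β j)
    (x y : Edge n → Fin 2) :
    gibbsERG n k m Hs β x * gibbsERG n k m Hs β y ≤
      gibbsERG n k m Hs β (fun i => max (x i) (y i))
        * gibbsERG n k m Hs β (fun i => min (x i) (y i)) := by
  have hZ := ZERG_pos n k m Hs β
  have hham := ham_supermodular n k hn hk m Hs β hm₀ hH₁ hβ x y
  unfold gibbsERG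
  rw [div_mul_div_comm, div_mul_div_comm, ← Real.exp_add, ← Real.exp_add]
  apply div_le_div_of_nonneg_right ?_ (by positivity)
  exact Real.exp_le_exp.mpr hham
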